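/- Two random lifetimes X and Y with common support D¹ satisfy the proportional hazard rate model P(Y > t) = (P(X > t))^α for some α > 0 and all t ∈ D¹ if and only if GT_X(t) = GT_Y(t) for all t ∈ D¹. -/

import Mathlib

open MeasureTheory intervalIntegral

noncomputable def GTindex (H : ℝ → ℝ) (t : ℝ) : ℝ :=
  1 - 2 / (t * H t) * ∫ u in (0:ℝ)..t, H u

section aux

variable {HX HY : ℝ → ℝ} {b : ℝ}

lemma aux_integrable (hb : 0 < b) (hHXcont : ContinuousOn HX (Set.Ico 0 b))
    {t : ℝ} (ht : t ∈ Set.Ioo (0:ℝ) b) :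
    IntervalIntegrable HX volume 0 t := by
  apply (hHXcont.mono ?_).intervalIntegrable
  rw [Set.uIcc_of_le ht.1.le]
  exact fun u hu => ⟨hu.1, lt_of_le_of_lt hu.2 ht.2⟩

lemma aux_int_pos (hb : 0 < b) (hHXcont : ContinuousOn HX (Set.Ico 0 b))
    (hHXpos : ∀ t ∈ Set.Ioo (0:ℝ) b, 0 < HX t)
    {t : ℝ} (ht : t ∈ Set.Ioo (0:ℝ) b) :
    0 < ∫ u in (0:ℝ)..t, HX u := by
  apply intervalIntegral_pos_of_pos_on (aux_integrable hb hHXcont ht)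
  · intro x hx
    exact hHXpos x ⟨hx.1, hx.2.trans ht.2⟩
  · exact ht.1

lemma aux_hasDerivAt (hb : 0 < b) (hHXcont : ContinuousOn HX (Set.Ico 0 b))
    {t : ℝ} (ht : t ∈ Set.Ioo (0:ℝ) b) :
    HasDerivAt (fun s => ∫ u in (0:ℝ)..s, HX u) (HX t) t := by
  apply intervalIntegral.integral_hasDerivAt_right (aux_integrable hb hHXcont ht)
  · exact (hHXcont.mono (Set.Ioo_subset_Ico_self)).stronglyMeasurableAtFilter
      isOpen_Ioo t ht
  · exact (hHXcont.mono (Set.Ioo_subset_Ico_self)).continuousAt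
      (isOpen_Ioo.mem_nhds ht)

end aux

/-- Proportional hazards characterization: `P(Y > t) = P(X > t)^α` on the common support
`D¹ = (0,b)` (equivalently `H_Y = α·H_X`) for some `α > 0` iff `GT_X = GT_Y` on `D¹`. -/
theorem stmt7 (HX HY : ℝ → ℝ) (b : ℝ) (hb : 0 < b)
    (hHX0 : HX 0 = 0) (hHY0 : HY 0 = 0)
    (hHXcont : ContinuousOn HX (Set.Ico 0 b)) (hHYcont : ContinuousOn HY (Set.Ico 0 b))
    (hHXpos : ∀ t ∈ Set.Ioo (0:ℝ) b, 0 < HX t)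
    (hHYpos : ∀ t ∈ Set.Ioo (0:ℝ) b, 0 < HY t) :
    (∃ α : ℝ, 0 < α ∧ ∀ t ∈ Set.Ioo (0:ℝ) b, HY t = α * HX t) ↔
      (∀ t ∈ Set.Ioo (0:ℝ) b, GTindex HX t = GTindex HY t) := by
  set F : ℝ → ℝ := fun s => ∫ u in (0:ℝ)..s, HX u with hF
  set G : ℝ → ℝ := fun s => ∫ u in (0:ℝ)..s, HY u with hG
  constructor
  · rintro ⟨α, hα, hprop⟩ t ht
    have hGt : G t = α * F t := by
      rw [hG, hF]
      simp only
      rw [← intervalIntegral.integral_const_mul]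
      apply intervalIntegral.integral_congr
      intro u hu
      rw [Set.uIcc_of_le ht.1.le] at hu
      rcases eq_or_lt_of_le hu.1 with h0 | h0
      · simp [← h0, hHY0, hHX0]
      · exact hprop u ⟨h0, lt_of_le_of_lt hu.2 ht.2⟩
    have hXt := (hHXpos t ht).ne'
    have ht0 := ht.1.ne'
    unfold GTindex
    rw [show (∫ u in (0:ℝ)..t, HX u) = F t from rfl,
      show (∫ u in (0:ℝ)..t, HY u) = G t from rfl, hGt, hprop t ht]
    field_simp
  · intro hGT
    -- the key pointwise relation: F t * HY t = G t * HX t on (0,b)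
    have key : ∀ t ∈ Set.Ioo (0:ℝ) b, F t * HY t = G t * HX t := by
      intro t ht
      have h := hGT t ht
      unfold GTindex at h
      have h2 : 2 / (t * HX t) * F t = 2 / (t * HY t) * G t := by linarith
      have hXt := (hHXpos t ht).ne'
      have hYt := (hHYpos t ht).ne'
      have ht0 := ht.1.ne'
      field_simp at h2
      have h3 : (2*t) * (F t * HY t) = (2*t) * (G t * HX t) := by linear_combination (2*t) * h2
      exact mul_left_cancel₀ (by positivity : (2*t:ℝ) ≠ 0) h3
    -- the quotient G/F is constant on (0,b)
    have hconst : ∀ s ∈ Set.Ioo (0:ℝ) b, ∀ t ∈ Set.Ioo (0:ℝ) b,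
        G s / F s = G t / F t := by
      have main : ∀ s ∈ Set.Ioo (0:ℝ) b, ∀ t ∈ Set.Ioo (0:ℝ) b, s < t →
          G s / F s = G t / F t := by
        intro s hs t ht hst
        have hsub : Set.Icc s t ⊆ Set.Ioo (0:ℝ) b := fun u hu =>
          ⟨lt_of_lt_of_le hs.1 hu.1, lt_of_le_of_lt hu.2 ht.2⟩
        have hderiv : ∀ c ∈ Set.Icc s t,
            HasDerivAt (fun x => G x / F x) 0 c := by
          intro c hc
          have hc' := hsub hc
          have hdF := aux_hasDerivAt hb hHXcont hc'
          have hdG := aux_hasDerivAt hb hHYcont hc'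
          have hFc : F c ≠ 0 := (aux_int_pos hb hHXcont hHXpos hc').ne'
          have := hdG.div hdF hFc
          refine this.congr_deriv ?_
          have hk := key c hc'
          simp only [hF, hG] at hk
          rw [div_eq_zero_iff]
          left
          linarith [hk]
        have hcont : ContinuousOn (fun x => G x / F x) (Set.Icc s t) :=
          fun c hc => ((hderiv c hc).continuousAt).continuousWithinAt
        obtain ⟨c, hc, hc2⟩ := exists_hasDerivAt_eq_slope (fun x => G x / F x)
          (fun _ => 0) hst hcont (fun x hx => hderiv x ⟨hx.1.le, hx.2.le⟩)
        have : G t / F t - G s / F s = 0 := by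
          have htne : t - s ≠ 0 := sub_ne_zero.mpr hst.ne'
          field_simp at hc2
          linarith [hc2]
        linarith
      intro s hs t ht
      rcases lt_trichotomy s t with h | h | h
      · exact main s hs t ht h
      · rw [h]
      · exact (main t ht s hs h).symm
    set t₀ : ℝ := b / 2 with ht₀def
    have ht₀ : t₀ ∈ Set.Ioo (0:ℝ) b := ⟨by positivity, by linarith⟩
    refine ⟨G t₀ / F t₀, div_pos (aux_int_pos hb hHYcont hHYpos ht₀)
      (aux_int_pos hb hHXcont hHXpos ht₀), ?_⟩
    intro t ht
    have hFt : F t ≠ 0 := (aux_int_pos hb hHXcont hHXpos ht).ne'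
    have h1 := hconst t₀ ht₀ t ht
    have h2 := key t ht
    rw [h1]
    field_simp
    linear_combination h2
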